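/- There exists an absolute constant c ≥ 1 such that for every a with 0 < a ≤ 1 and every v > 0 with a·v ≥ 2, c⁻¹ · 1/(v² · ((log v)² + 1)) ≤ ∫_0^a e^{−v·u} · u/((log u)² + 1) du ≤ c · 1/(v² · ((log v)² + 1)). -/

import Mathlib

open MeasureTheory Real

lemma my_aux_poly (t : ℝ) (ht : 0 < t) : t * ((Real.log t)^2 + 1) ≤ t^3 + t + 5 := by
  rcases le_or_gt 1 t with h | h
  · have h0 : 0 ≤ Real.log t := Real.log_nonneg h
    have h1 : Real.log t ≤ t - 1 := Real.log_le_sub_one_of_pos ht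
    have hsq : (Real.log t)^2 ≤ (t-1)^2 := by nlinarith
    have h2 : t * (Real.log t)^2 ≤ t * (t-1)^2 := by nlinarith
    nlinarith [sq_nonneg (t-1)]
  · set s := Real.sqrt t with hs
    have hsp : 0 < s := Real.sqrt_pos.2 ht
    have hst : s ^ 2 = t := Real.sq_sqrt ht.le
    have hlog : Real.log t = 2 * Real.log s := by
      rw [hs, Real.log_sqrt ht.le]; ring
    have hs1 : s ≤ 1 := by nlinarith
    have hl0 : Real.log s ≤ 0 := Real.log_nonpos hsp.le hs1
    have hl1 : Real.log s⁻¹ ≤ s⁻¹ - 1 := Real.log_le_sub_one_of_pos (by positivity)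
    rw [Real.log_inv] at hl1
    have hsl : s * (-Real.log s) ≤ 1 := by
      have h5 : -Real.log s ≤ s⁻¹ := by linarith
      calc s * (-Real.log s) ≤ s * s⁻¹ := by nlinarith
        _ = 1 := by field_simp
    have h4 : t * (Real.log t)^2 ≤ 4 := by
      have heq : t * (Real.log t)^2 = 4 * (s * (-Real.log s))^2 := by
        rw [hlog, ← hst]; ring
      nlinarith [mul_nonneg hsp.le (neg_nonneg.2 hl0)]
    nlinarith [pow_nonneg ht.le 3]

lemma my_aux_cube (t : ℝ) (ht : 0 ≤ t) : t^3 ≤ 216 * Real.exp (t/2) := by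
  have h1 : t/6 + 1 ≤ Real.exp (t/6) := Real.add_one_le_exp (t/6)
  have h2 : (t/6)^3 ≤ (Real.exp (t/6))^3 := by
    apply pow_le_pow_left₀ (by positivity); linarith
  have h3 : (Real.exp (t/6))^3 = Real.exp (t/2) := by
    rw [← Real.exp_nat_mul]; congr 1; push_cast; ring
  nlinarith [h2, h3]

lemma my_key (u v : ℝ) (hu : 0 < u) (hv : 0 < v) :
    Real.exp (-(v*u)) * u / ((Real.log u)^2 + 1)
      ≤ 446 / (v * ((Real.log v)^2 + 1)) * Real.exp (-(v/2*u)) := by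
  set L := (Real.log u)^2 + 1 with hL
  set Lv := (Real.log v)^2 + 1 with hLv
  have hLpos : 0 < L := by positivity
  have hLvpos : 0 < Lv := by positivity
  set t := v * u with htdef
  have htpos : 0 < t := mul_pos hv hu
  have hlogt : Real.log t = Real.log v + Real.log u := Real.log_mul hv.ne' hu.ne'
  have hlv : Real.log v = Real.log t - Real.log u := by linarith
  have h1 : Lv ≤ 2 * L * ((Real.log t)^2 + 1) := by
    rw [hL, hLv, hlv]
    nlinarith [sq_nonneg (Real.log t + Real.log u), sq_nonneg (Real.log t * Real.log u)]
  have h2 : t * ((Real.log t)^2 + 1) ≤ t^3 + t + 5 := my_aux_poly t htpos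
  have h3 : t^3 + t + 5 ≤ 223 * Real.exp (t/2) := by
    have hc := my_aux_cube t htpos.le
    have he : t/2 + 1 ≤ Real.exp (t/2) := Real.add_one_le_exp (t/2)
    nlinarith
  have hmain : t * Lv ≤ 446 * Real.exp (t/2) * L := by
    calc t * Lv ≤ 2 * L * (t * ((Real.log t)^2 + 1)) := by nlinarith [htpos.le]
      _ ≤ 2 * L * (223 * Real.exp (t/2)) := by
          apply mul_le_mul_of_nonneg_left (h2.trans h3) (by positivity)
      _ = 446 * Real.exp (t/2) * L := by ring
  have het : Real.exp (-(t/2)) * (t * Lv) ≤ 446 * L := by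
    have h5 : Real.exp (-(t/2)) * (t * Lv) ≤ Real.exp (-(t/2)) * (446 * Real.exp (t/2) * L) :=
      mul_le_mul_of_nonneg_left hmain (Real.exp_nonneg _)
    have h6 : Real.exp (-(t/2)) * Real.exp (t/2) = 1 := by
      rw [← Real.exp_add]; simp
    nlinarith [h5, h6, hLpos.le]
  have hepos := Real.exp_pos (-(v/2*u))
  rw [div_le_iff₀ hLpos, div_mul_eq_mul_div, div_mul_eq_mul_div,
    le_div_iff₀ (by positivity : (0:ℝ) < v * Lv)]
  have hE : Real.exp (-(v*u)) = Real.exp (-(v/2*u)) * Real.exp (-(t/2)) := by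
    rw [← Real.exp_add]; congr 1; rw [htdef]; ring
  calc Real.exp (-(v*u)) * u * (v * Lv)
      = Real.exp (-(v/2*u)) * (Real.exp (-(t/2)) * (t * Lv)) := by rw [hE, htdef]; ring
    _ ≤ Real.exp (-(v/2*u)) * (446 * L) := mul_le_mul_of_nonneg_left het hepos.le
    _ = 446 * Real.exp (-(v/2*u)) * L := by ring

theorem stmt_5 :
    ∃ c : ℝ, 1 ≤ c ∧ ∀ a v : ℝ, 0 < a → a ≤ 1 → 0 < v → 2 ≤ a * v →
      c⁻¹ * (1 / (v ^ 2 * ((Real.log v) ^ 2 + 1)))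
        ≤ (∫ u in Set.Ioc (0:ℝ) a, Real.exp (-(v * u)) * u / ((Real.log u) ^ 2 + 1)) ∧
      (∫ u in Set.Ioc (0:ℝ) a, Real.exp (-(v * u)) * u / ((Real.log u) ^ 2 + 1))
        ≤ c * (1 / (v ^ 2 * ((Real.log v) ^ 2 + 1))) := by
  refine ⟨892, by norm_num, fun a v ha ha1 hv hav => ?_⟩
  set Lv := (Real.log v)^2 + 1 with hLv
  have hLvpos : 0 < Lv := by positivity
  have hv2 : 2 ≤ v := by nlinarith
  -- measurability
  have hmeas : Measurable (fun u => Real.exp (-(v*u)) * u / ((Real.log u)^2 + 1)) := by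
    apply Measurable.div
    · exact (Real.measurable_exp.comp ((measurable_const.mul measurable_id).neg)).mul measurable_id
    · exact ((Real.measurable_log.pow_const 2).add measurable_const)
  -- integrability of the integrand on Ioc 0 a
  have hint : IntegrableOn (fun u => Real.exp (-(v*u)) * u / ((Real.log u)^2 + 1))
      (Set.Ioc (0:ℝ) a) := by
    apply Measure.integrableOn_of_bounded (M := 1) (by simp) hmeas.aestronglyMeasurable
    rw [ae_restrict_iff' measurableSet_Ioc]
    refine Filter.Eventually.of_forall fun u hu => ?_
    have hu0 : 0 < u := hu.1
    have hL : (1:ℝ) ≤ (Real.log u)^2 + 1 := by nlinarith [sq_nonneg (Real.log u)]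
    have he : Real.exp (-(v*u)) ≤ 1 := Real.exp_le_one_iff.2 (by nlinarith)
    have hfnn : (0:ℝ) ≤ Real.exp (-(v*u)) * u / ((Real.log u)^2 + 1) := by positivity
    rw [Real.norm_eq_abs, abs_of_nonneg hfnn]
    rw [div_le_one (by positivity)]
    nlinarith [Real.exp_pos (-(v*u)), hu.2.trans ha1]
  -- a.e. nonnegativity
  have hnn : 0 ≤ᵐ[volume.restrict (Set.Ioc (0:ℝ) a)]
      (fun u => Real.exp (-(v*u)) * u / ((Real.log u)^2 + 1)) := by
    refine (ae_restrict_iff' measurableSet_Ioc).2 (Filter.Eventually.of_forall fun u hu => ?_)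
    have hu0 : 0 < u := hu.1
    positivity
  constructor
  · -- lower bound
    set m : ℝ := Real.exp (-2) / (v * Lv) with hm
    have hsub : Set.Ioc (1/v) (2/v) ⊆ Set.Ioc (0:ℝ) a := by
      intro u hu
      refine ⟨lt_trans (by positivity) hu.1, hu.2.trans ?_⟩
      rw [div_le_iff₀ hv]; linarith [mul_comm a v]
    have hconst : ∀ u ∈ Set.Ioc (1/v) (2/v),
        m ≤ Real.exp (-(v*u)) * u / ((Real.log u)^2 + 1) := by
      intro u hu
      have hu0 : 0 < u := lt_trans (by positivity) hu.1
      have hL : (0:ℝ) < (Real.log u)^2 + 1 := by positivity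
      have huv1 : 1 < u * v := by
        have := (div_lt_iff₀ hv).1 hu.1; linarith
      have huv2 : u * v ≤ 2 := (le_div_iff₀ hv).1 hu.2
      have he : Real.exp (-2) ≤ Real.exp (-(v*u)) := by
        apply Real.exp_le_exp.2; nlinarith [mul_comm u v]
      have hu1 : u ≤ 1 := by
        refine hu.2.trans ?_
        rw [div_le_one hv]; linarith
      have hlu : Real.log u ≤ 0 := Real.log_nonpos hu0.le hu1
      have hlv0 : 0 ≤ Real.log v := Real.log_nonneg (by linarith)
      have hlul : -Real.log v < Real.log u := by
        have := Real.log_lt_log (by positivity) hu.1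
        rwa [one_div, Real.log_inv] at this
      have hsq : (Real.log u)^2 ≤ (Real.log v)^2 := by nlinarith
      rw [hm, div_le_div_iff₀ (by positivity) hL]
      have h1 : Real.exp (-2) * ((Real.log u)^2+1) ≤ Real.exp (-2) * Lv := by
        rw [hLv]; nlinarith [Real.exp_pos (-2:ℝ)]
      have h2 : Real.exp (-2) * Lv ≤ Real.exp (-(v*u)) * u * (v * Lv) := by
        have : Real.exp (-2) * 1 ≤ Real.exp (-(v*u)) * (u*v) := by
          apply mul_le_mul he (by linarith) (by norm_num) (Real.exp_pos _).le
        nlinarith [Real.exp_pos (-(v*u))]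
      linarith
    have hlow2 : m * (1/v) ≤ ∫ u in Set.Ioc (1/v) (2/v),
        Real.exp (-(v*u)) * u / ((Real.log u)^2 + 1) := by
      have := setIntegral_mono_on (integrableOn_const (by
          rw [Real.volume_Ioc]; exact ENNReal.ofReal_ne_top))
        (hint.mono_set hsub) measurableSet_Ioc hconst
      rw [setIntegral_const, Real.volume_real_Ioc_of_le (by
        gcongr; norm_num)] at this
      have heq : (2/v - 1/v) = 1/v := by field_simp; ring
      rw [heq, smul_eq_mul, mul_comm] at this
      exact this
    have hlow1 : (∫ u in Set.Ioc (1/v) (2/v), Real.exp (-(v*u)) * u / ((Real.log u)^2 + 1))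
        ≤ ∫ u in Set.Ioc (0:ℝ) a, Real.exp (-(v*u)) * u / ((Real.log u)^2 + 1) :=
      setIntegral_mono_set hint hnn (HasSubset.Subset.eventuallyLE hsub)
    have hexp2 : (892:ℝ)⁻¹ ≤ Real.exp (-2) := by
      have h1 : Real.exp 2 = Real.exp 1 * Real.exp 1 := by rw [← Real.exp_add]; norm_num
      have h2 := Real.exp_one_lt_d9
      have h3 : Real.exp 2 < 892 := by nlinarith [Real.exp_pos 1]
      rw [Real.exp_neg]
      exact inv_anti₀ (Real.exp_pos 2) h3.le
    have hfin : (892:ℝ)⁻¹ * (1 / (v^2 * Lv)) ≤ m * (1/v) := by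
      have : m * (1/v) = Real.exp (-2) * (1 / (v^2 * Lv)) := by
        rw [hm]; field_simp
      rw [this]
      apply mul_le_mul_of_nonneg_right hexp2 (by positivity)
    linarith
  · -- upper bound
    have hce : Continuous fun u : ℝ => Real.exp (-(v/2*u)) :=
      Real.continuous_exp.comp ((continuous_const.mul continuous_id).neg)
    have hgcont : Continuous (fun u : ℝ => 446 / (v * Lv) * Real.exp (-(v/2*u))) :=
      continuous_const.mul hce
    have hgint : IntegrableOn (fun u : ℝ => 446 / (v * Lv) * Real.exp (-(v/2*u)))
        (Set.Ioc (0:ℝ) a) := hgcont.integrableOn_Ioc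
    have h1 : (∫ u in Set.Ioc (0:ℝ) a, Real.exp (-(v*u)) * u / ((Real.log u)^2 + 1))
        ≤ ∫ u in Set.Ioc (0:ℝ) a, 446 / (v * Lv) * Real.exp (-(v/2*u)) :=
      setIntegral_mono_on hint hgint measurableSet_Ioc (fun u hu => my_key u v hu.1 hv)
    have hF : ∀ x : ℝ, HasDerivAt (fun x => -(2/v) * Real.exp (-(v/2*x)))
        (Real.exp (-(v/2*x))) x := by
      intro x
      have hd1 : HasDerivAt (fun x : ℝ => -(v/2*x)) (-(v/2)) x := by
        have h := ((hasDerivAt_id x).const_mul (v/2)).neg; rw [mul_one] at h; exact h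
      have hd2 := (hd1.exp).const_mul (-(2/v))
      have e : -(2/v) * (Real.exp (-(v/2*x)) * -(v/2)) = Real.exp (-(v/2*x)) := by
        field_simp
      rw [e] at hd2; exact hd2
    have hexpint : ∫ u in Set.Ioc (0:ℝ) a, Real.exp (-(v/2*u)) ≤ 2/v := by
      rw [← intervalIntegral.integral_of_le ha.le]
      rw [intervalIntegral.integral_eq_sub_of_hasDerivAt (fun x _ => hF x)
        (hce.intervalIntegrable 0 a)]
      have h0 : -(v/2*(0:ℝ)) = 0 := by ring
      rw [h0, Real.exp_zero]
      have h2v : (0:ℝ) < 2/v := by positivity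
      nlinarith [mul_pos h2v (Real.exp_pos (-(v/2*a)))]
    have h2 : (∫ u in Set.Ioc (0:ℝ) a, 446 / (v * Lv) * Real.exp (-(v/2*u)))
        = 446 / (v * Lv) * ∫ u in Set.Ioc (0:ℝ) a, Real.exp (-(v/2*u)) :=
      integral_const_mul _ _
    have h3 : 446 / (v * Lv) * (∫ u in Set.Ioc (0:ℝ) a, Real.exp (-(v/2*u)))
        ≤ 446 / (v * Lv) * (2/v) :=
      mul_le_mul_of_nonneg_left hexpint (by positivity)
    have h4 : 446 / (v * Lv) * (2/v) = 892 * (1 / (v^2 * Lv)) := by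
      field_simp; ring
    linarith [h1, h2 ▸ h3]
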